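/- arXiv:2511.12654 — 2 statements merged into one kernel-verified Lean document; each statement's English description precedes it below -/
import Mathlib

section
/- Let 0 < δ < 1 and 0 < R. There exists κ with 0 < κ < 1 such that for all integers n and N with 1 ≤ n < N R² (1−δ), one has Q(n, N R²)/Q(n+1, N R²) ≤ κ, where Q(m,z) = e^{-z} ∑_{k=0}^{m-1} z^k/k!. -/
/-- `Q(m,z) = e^{-z} ∑_{k=0}^{m-1} z^k/k!`. -/
noncomputable def Qfun (m : ℕ) (z : ℝ) : ℝ :=
  Real.exp (-z) * ∑ k ∈ Finset.range m, z ^ k / (Nat.factorial k)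

private lemma step_lem (z δ : ℝ) (hz : 0 < z) (hδ1 : δ < 1) (m : ℕ)
    (h : (m : ℝ) + 1 ≤ z * (1 - δ)) :
    z ^ m / (Nat.factorial m) ≤ (1 - δ) * (z ^ (m + 1) / (Nat.factorial (m + 1))) := by
  have hm1 : (0:ℝ) < (m:ℝ) + 1 := by positivity
  have hfac : (0:ℝ) < (Nat.factorial m : ℝ) := by positivity
  have heq : (1 - δ) * (z ^ (m + 1) / (Nat.factorial (m + 1)))
      = (z ^ m / (Nat.factorial m)) * ((1 - δ) * z / ((m:ℝ) + 1)) := by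
    rw [Nat.factorial_succ]; push_cast; rw [pow_succ]; field_simp
  rw [heq]
  have hone : (1:ℝ) ≤ (1 - δ) * z / ((m:ℝ) + 1) := by
    rw [le_div_iff₀ hm1]; nlinarith
  have hpos : (0:ℝ) ≤ z ^ m / (Nat.factorial m) := by positivity
  nlinarith

theorem stmt_6 (δ R : ℝ) (hδ : 0 < δ) (hδ1 : δ < 1) (hR : 0 < R) :
    ∃ κ : ℝ, 0 < κ ∧ κ < 1 ∧
      ∀ n N : ℕ, 1 ≤ n → (n : ℝ) < N * R ^ 2 * (1 - δ) →
        Qfun n (N * R ^ 2) / Qfun (n + 1) (N * R ^ 2) ≤ κ := by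
  refine ⟨1 - δ, by linarith, by linarith, ?_⟩
  intro n N hn hlt
  set z : ℝ := N * R ^ 2 with hzdef
  have hδ' : (0:ℝ) < 1 - δ := by linarith
  have hzpos : 0 < z := by
    by_contra hc
    push_neg at hc
    have : (n:ℝ) ≥ 1 := by exact_mod_cast hn
    nlinarith
  have hnle : (n : ℝ) ≤ z * (1 - δ) := le_of_lt hlt
  -- chain lemma
  have chain : ∀ j k : ℕ, k + j + 1 = n →
      z ^ k / (Nat.factorial k) ≤ (1 - δ) ^ j * (z ^ (n - 1) / (Nat.factorial (n - 1))) := by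
    intro j
    induction j with
    | zero =>
      intro k hk
      have : k = n - 1 := by omega
      subst this
      simp
    | succ j ih =>
      intro k hk
      have h1 : (k + 1) + j + 1 = n := by omega
      have h2 := ih (k + 1) h1
      have hk1 : (k:ℝ) + 1 ≤ z * (1 - δ) := by
        have : (k:ℝ) + 1 ≤ (n:ℝ) := by
          have : k + 1 ≤ n := by omega
          exact_mod_cast this
        linarith
      have h3 := step_lem z δ hzpos hδ1 k hk1
      calc z ^ k / (Nat.factorial k)
          ≤ (1 - δ) * (z ^ (k + 1) / (Nat.factorial (k + 1))) := h3
        _ ≤ (1 - δ) * ((1 - δ) ^ j * (z ^ (n - 1) / (Nat.factorial (n - 1)))) := by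
            apply mul_le_mul_of_nonneg_left h2 (le_of_lt hδ')
        _ = (1 - δ) ^ (j + 1) * (z ^ (n - 1) / (Nat.factorial (n - 1))) := by ring
  set a : ℝ := z ^ (n - 1) / (Nat.factorial (n - 1)) with ha
  have hapos : 0 < a := by positivity
  -- sum bound
  have hsum : ∑ k ∈ Finset.range n, z ^ k / (Nat.factorial k) ≤ a / δ := by
    have h1 : ∑ k ∈ Finset.range n, z ^ k / (Nat.factorial k)
        ≤ ∑ k ∈ Finset.range n, (1 - δ) ^ (n - 1 - k) * a := by
      apply Finset.sum_le_sum
      intro k hk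
      rw [Finset.mem_range] at hk
      exact chain (n - 1 - k) k (by omega)
    have h2 : ∑ k ∈ Finset.range n, (1 - δ) ^ (n - 1 - k) * a
        = (∑ j ∈ Finset.range n, (1 - δ) ^ j) * a := by
      rw [← Finset.sum_mul]
      congr 1
      rw [← Finset.sum_range_reflect]
      apply Finset.sum_congr rfl
      intro k hk
      rw [Finset.mem_range] at hk
      congr 1
      omega
    have h3 : (∑ j ∈ Finset.range n, (1 - δ) ^ j) ≤ 1 / δ := by
      have hg : (∑ j ∈ Finset.range n, (1 - δ) ^ j) * ((1 - δ) - 1) = (1 - δ) ^ n - 1 :=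
        geom_sum_mul _ _
      have hpow : (0:ℝ) ≤ (1 - δ) ^ n := by positivity
      have hs : (∑ j ∈ Finset.range n, (1 - δ) ^ j) * δ ≤ 1 := by nlinarith
      rw [le_div_iff₀ hδ]
      linarith [hs]
    calc ∑ k ∈ Finset.range n, z ^ k / (Nat.factorial k)
        ≤ (∑ j ∈ Finset.range n, (1 - δ) ^ j) * a := by rw [← h2]; exact h1
      _ ≤ (1 / δ) * a := by apply mul_le_mul_of_nonneg_right h3 (le_of_lt hapos)
      _ = a / δ := by ring
  -- last term bound : a ≤ (1-δ) * z^n/n!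
  have hlast : a ≤ (1 - δ) * (z ^ n / (Nat.factorial n)) := by
    have h := step_lem z δ hzpos hδ1 (n - 1) (by
      have : ((n - 1 : ℕ) : ℝ) + 1 = (n : ℝ) := by
        have : n - 1 + 1 = n := by omega
        exact_mod_cast congrArg (Nat.cast : ℕ → ℝ) this
      rw [this]; exact hnle)
    have hn1 : n - 1 + 1 = n := by omega
    rw [hn1] at h
    exact h
  -- assemble
  have hQsucc : Qfun (n + 1) z = Real.exp (-z) *
      ((∑ k ∈ Finset.range n, z ^ k / (Nat.factorial k)) + z ^ n / (Nat.factorial n)) := by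
    rw [Qfun, Finset.sum_range_succ]
  have hexp : 0 < Real.exp (-z) := Real.exp_pos _
  have hSpos : 0 < ∑ k ∈ Finset.range n, z ^ k / (Nat.factorial k) := by
    apply Finset.sum_pos
    · intro k _; positivity
    · exact ⟨0, Finset.mem_range.mpr (by omega)⟩
  have htpos : 0 < z ^ n / (Nat.factorial n) := by positivity
  have hQ1pos : 0 < Qfun (n + 1) z := by
    rw [hQsucc]; positivity
  rw [div_le_iff₀ hQ1pos, hQsucc, Qfun]
  set S := ∑ k ∈ Finset.range n, z ^ k / (Nat.factorial k)
  set t := z ^ n / (Nat.factorial n)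
  have key : δ * S ≤ (1 - δ) * t := by
    have h1 : δ * S ≤ a := by
      rw [le_div_iff₀ hδ] at hsum
      linarith [hsum]
    linarith [hlast]
  nlinarith [mul_le_mul_of_nonneg_left key (le_of_lt hexp)]
end

section
/- The kernel K(z,w) = (1 − (z + w̄ + 1) e^{−z−w̄}) / (π (z + w̄)²) on the right half-plane {Re z > 0} admits the integral representation K(z,w) = (1/π) ∫_0^1 s e^{−s(z+w̄)} ds, and consequently for every continuous compactly supported g on the right half-plane, ∬ K(z,w) g(z) conj(g(w)) dA(z) dA(w) ≥ 0 (K is positive semi-definite). -/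
open Complex MeasureTheory

/-- The limiting hard-wall kernel
`K(z,w) = (1 - (z + w̄ + 1) e^{-z-w̄}) / (π (z + w̄)²)`. -/
noncomputable def hardWallKernel (z w : ℂ) : ℂ :=
  (1 - (z + (starRingEnd ℂ) w + 1) * Complex.exp (-(z + (starRingEnd ℂ) w))) /
    (↑Real.pi * (z + (starRingEnd ℂ) w) ^ 2)

namespace StmtAux

lemma norm_exp_le_one {s : ℝ} (hs : 0 ≤ s) {x : ℂ} (hx : 0 ≤ x.re) :
    ‖Complex.exp (-(s : ℂ) * x)‖ ≤ 1 := by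
  rw [Complex.norm_exp]
  have h : (-(s : ℂ) * x).re = -(s * x.re) := by
    simp [Complex.mul_re]
  rw [h]
  exact Real.exp_le_one_iff.mpr (neg_nonpos.mpr (mul_nonneg hs hx))

lemma bound_aux {s : ℝ} (h0 : 0 ≤ s) (h1 : s ≤ 1) {x : ℂ} (hx : 0 ≤ x.re) (c : ℂ) :
    ‖(s : ℂ) * Complex.exp (-(s : ℂ) * x) * c‖ ≤ ‖c‖ := by
  rw [norm_mul, norm_mul]
  have h2 : ‖(s : ℂ)‖ ≤ 1 := by
    rw [Complex.norm_real, Real.norm_eq_abs, _root_.abs_of_nonneg h0]; exact h1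
  have h3 := norm_exp_le_one h0 hx
  calc ‖(s : ℂ)‖ * ‖Complex.exp (-(s : ℂ) * x)‖ * ‖c‖ ≤ 1 * 1 * ‖c‖ :=
        mul_le_mul (mul_le_mul h2 h3 (norm_nonneg _) zero_le_one) le_rfl
          (norm_nonneg _) (by norm_num)
    _ = ‖c‖ := by ring

lemma part1 {a : ℂ} (ha : a ≠ 0) :
    (∫ s in (0:ℝ)..1, (s : ℂ) * Complex.exp (-(s : ℂ) * a))
      = (1 - (a + 1) * Complex.exp (-a)) / a ^ 2 := by
  have hderiv : ∀ u : ℂ,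
      HasDerivAt (fun u : ℂ => -(((u * a + 1) * Complex.exp (-u * a)) / a ^ 2))
        (u * Complex.exp (-u * a)) u := by
    intro u
    have h1 : HasDerivAt (fun u : ℂ => u * a + 1) a u := by
      simpa using ((hasDerivAt_id u).mul_const a).add_const 1
    have h2 : HasDerivAt (fun u : ℂ => Complex.exp (-u * a))
        (Complex.exp (-u * a) * -a) u := by
      have h0 : HasDerivAt (fun u : ℂ => -u * a) (-a) u := by
        simpa using ((hasDerivAt_id u).neg.mul_const a)
      exact h0.cexp
    have h3 := ((h1.mul h2).div_const (a ^ 2)).neg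
    convert h3 using 1
    have hexp := Complex.exp_ne_zero (-u * a)
    case e'_9 =>
      rw [eq_comm, neg_eq_iff_eq_neg, div_eq_iff (pow_ne_zero 2 ha)]
      ring
    all_goals rfl
  have key := intervalIntegral.integral_eq_sub_of_hasDerivAt (a := (0:ℝ)) (b := (1:ℝ))
    (f := fun s : ℝ => -((((s : ℂ) * a + 1) * Complex.exp (-(s : ℂ) * a)) / a ^ 2))
    (f' := fun s : ℝ => (s : ℂ) * Complex.exp (-(s : ℂ) * a))
    (fun s _ => (hderiv (s : ℂ)).comp_ofReal)
    (by
      apply Continuous.intervalIntegrable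
      exact (Complex.continuous_ofReal).mul
        (Complex.continuous_exp.comp ((Complex.continuous_ofReal.neg).mul continuous_const)))
  rw [key]
  simp only [Complex.ofReal_one, Complex.ofReal_zero, one_mul, zero_mul, neg_zero,
    Complex.exp_zero, mul_one, zero_add]
  field_simp
  ring

lemma kernel_eq {z w : ℂ} (hz : 0 < z.re) (hw : 0 < w.re) :
    hardWallKernel z w =
      (1 / (Real.pi : ℂ)) *
        ∫ s in (0:ℝ)..1, (s : ℂ) * Complex.exp (-(s : ℂ) * (z + (starRingEnd ℂ) w)) := by
  have hπ : (Real.pi : ℂ) ≠ 0 := by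
    exact_mod_cast Real.pi_ne_zero
  have hre : 0 < (z + (starRingEnd ℂ) w).re := by
    simp only [Complex.add_re, Complex.conj_re]
    linarith
  have ha : z + (starRingEnd ℂ) w ≠ 0 := by
    intro h
    rw [h] at hre
    simp at hre
  rw [part1 ha]
  unfold hardWallKernel
  field_simp
  try ring

end StmtAux

open StmtAux

theorem stmt_10 :
    (∀ z w : ℂ, 0 < z.re → 0 < w.re →
      hardWallKernel z w =
        (1 / (Real.pi : ℂ)) *
          ∫ s in (0:ℝ)..1, (s : ℂ) * Complex.exp (-(s : ℂ) * (z + (starRingEnd ℂ) w))) ∧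
    ∀ g : ℂ → ℂ, Continuous g → HasCompactSupport g →
      (Function.support g ⊆ {z : ℂ | 0 < z.re}) →
      (∫ z : ℂ, ∫ w : ℂ, hardWallKernel z w * g z * (starRingEnd ℂ) (g w)).im = 0 ∧
      0 ≤ (∫ z : ℂ, ∫ w : ℂ, hardWallKernel z w * g z * (starRingEnd ℂ) (g w)).re := by
  constructor
  · intro z w hz hw
    exact kernel_eq hz hw
  intro g hg hgc hsupp
  -- notation
  set μ : Measure ℂ := volume with hμdef
  have hgre : ∀ z : ℂ, g z ≠ 0 → 0 < z.re := fun z h => hsupp (Function.mem_support.mpr h)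
  have hgi : Integrable g μ := hg.integrable_of_hasCompactSupport hgc
  set C : ℝ := ∫ z, ‖g z‖ ∂μ with hCdef
  have hC0 : 0 ≤ C := integral_nonneg fun _ => norm_nonneg _
  -- the transform F
  set F : ℝ → ℂ := fun s => ∫ z, Complex.exp (-((|s| : ℝ) : ℂ) * z) * g z ∂μ with hFdef
  have hgb : ∀ (s : ℝ) (z : ℂ), 0 ≤ s → ‖Complex.exp (-(s : ℂ) * z) * g z‖ ≤ ‖g z‖ := by
    intro s z hs
    by_cases hz : g z = 0
    · simp [hz]
    · rw [norm_mul]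
      have := norm_exp_le_one hs (le_of_lt (hgre z hz))
      nlinarith [norm_nonneg (g z), norm_nonneg (Complex.exp (-(s:ℂ) * z))]
  have hFcont : Continuous F := by
    apply continuous_of_dominated (bound := fun z => ‖g z‖)
    · intro s
      exact ((Complex.continuous_exp.comp
        ((Complex.continuous_ofReal.comp continuous_const).neg.mul continuous_id)).mul hg).aestronglyMeasurable
    · intro s
      exact Filter.Eventually.of_forall fun z => hgb |s| z (abs_nonneg s)
    · exact hgi.norm
    · exact Filter.Eventually.of_forall fun z => by
        have : Continuous fun s : ℝ => (-((|s| : ℝ) : ℂ) * z) :=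
          ((Complex.continuous_ofReal.comp _root_.continuous_abs).neg.mul continuous_const)
        exact (Complex.continuous_exp.comp this).mul continuous_const
  have hFb : ∀ s : ℝ, ‖F s‖ ≤ C := by
    intro s
    refine (norm_integral_le_integral_norm _).trans ?_
    exact integral_mono_of_nonneg (Filter.Eventually.of_forall fun z => norm_nonneg _)
      hgi.norm (Filter.Eventually.of_forall fun z => hgb |s| z (abs_nonneg s))
  -- a.e. membership of second coordinate
  have hae2 : ∀ᵐ p : ℂ × ℝ ∂(μ.prod (volume.restrict (Set.Ioc (0:ℝ) 1))),
      p.2 ∈ Set.Ioc (0:ℝ) 1 :=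
    MeasureTheory.Measure.quasiMeasurePreserving_snd.ae
      (ae_restrict_mem measurableSet_Ioc)
  have hbound_int : Integrable (fun p : ℂ × ℝ => ‖g p.1‖)
      (μ.prod (volume.restrict (Set.Ioc (0:ℝ) 1))) := by
    haveI : IsFiniteMeasure (volume.restrict (Set.Ioc (0:ℝ) 1)) := by
      constructor
      rw [Measure.restrict_apply_univ]
      simp [Real.volume_Ioc]
    have hmeas : AEStronglyMeasurable (fun p : ℂ × ℝ => ‖g p.1‖)
        (μ.prod (volume.restrict (Set.Ioc (0:ℝ) 1))) :=
      ((hg.norm).comp continuous_fst).aestronglyMeasurable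
    rw [integrable_prod_iff hmeas]
    constructor
    · exact Filter.Eventually.of_forall fun z => by simpa using integrable_const ‖g z‖
    · simp only [norm_norm, integral_const, smul_eq_mul]
      exact (hgi.norm).const_mul _
  -- Step 1: inner integral identity
  have claimA : ∀ z : ℂ,
      (∫ w : ℂ, hardWallKernel z w * g z * (starRingEnd ℂ) (g w) ∂μ)
        = (1 / (Real.pi : ℂ)) *
            (g z * ∫ s in Set.Ioc (0:ℝ) 1,
              (s : ℂ) * Complex.exp (-(s : ℂ) * z) * (starRingEnd ℂ) (F s)) := by
    intro z
    by_cases hz0 : g z = 0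
    · simp [hz0]
    have hz : 0 < z.re := hgre z hz0
    -- the parametrized integrand
    set f₁ : ℂ → ℝ → ℂ := fun w s =>
      (s : ℂ) * Complex.exp (-(s : ℂ) * (z + (starRingEnd ℂ) w)) * (starRingEnd ℂ) (g w)
      with hf₁def
    have step_pt : ∀ w : ℂ, hardWallKernel z w * g z * (starRingEnd ℂ) (g w)
        = (1 / (Real.pi : ℂ)) * (g z * ∫ s in Set.Ioc (0:ℝ) 1, f₁ w s) := by
      intro w
      by_cases hw : g w = 0
      · simp [hw, hf₁def]
      have hwre : 0 < w.re := hgre w hw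
      rw [kernel_eq hz hwre, intervalIntegral.integral_of_le (by norm_num : (0:ℝ) ≤ 1)]
      have hmr : (∫ s in Set.Ioc (0:ℝ) 1, f₁ w s)
          = (∫ s in Set.Ioc (0:ℝ) 1,
              (s : ℂ) * Complex.exp (-(s : ℂ) * (z + (starRingEnd ℂ) w)))
            * (starRingEnd ℂ) (g w) := by
        rw [← integral_mul_const]
      rw [hmr]; ring
    calc (∫ w : ℂ, hardWallKernel z w * g z * (starRingEnd ℂ) (g w) ∂μ)
        = ∫ w : ℂ, (1 / (Real.pi : ℂ)) * (g z * ∫ s in Set.Ioc (0:ℝ) 1, f₁ w s) ∂μ :=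
          integral_congr_ae (Filter.Eventually.of_forall step_pt)
      _ = (1 / (Real.pi : ℂ)) *
            ∫ w : ℂ, g z * (∫ s in Set.Ioc (0:ℝ) 1, f₁ w s) ∂μ := integral_const_mul _ _
      _ = (1 / (Real.pi : ℂ)) * (g z *
            ∫ w : ℂ, (∫ s in Set.Ioc (0:ℝ) 1, f₁ w s) ∂μ) := by rw [integral_const_mul]
      _ = (1 / (Real.pi : ℂ)) * (g z *
            ∫ s in Set.Ioc (0:ℝ) 1, (∫ w : ℂ, f₁ w s ∂μ)) := by
          rw [integral_integral_swap]
          -- integrability on the product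
          apply Integrable.mono hbound_int
          · apply Continuous.aestronglyMeasurable
            apply Continuous.mul
            apply Continuous.mul
            · exact Complex.continuous_ofReal.comp continuous_snd
            · exact Complex.continuous_exp.comp
                (((Complex.continuous_ofReal.comp continuous_snd).neg).mul
                  (continuous_const.add (Complex.continuous_conj.comp continuous_fst)))
            · exact Complex.continuous_conj.comp (hg.comp continuous_fst)
          · filter_upwards [hae2] with p hp
            rcases p with ⟨w, s⟩
            simp only [Function.uncurry, hf₁def]
            by_cases hw : g w = 0
            · simp [hw]
            have hwre : 0 < w.re := hgre w hw
            have hre : 0 ≤ (z + (starRingEnd ℂ) w).re := by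
              simp only [Complex.add_re, Complex.conj_re]; linarith
            refine le_trans (bound_aux hp.1.le hp.2 hre _) ?_
            rw [Real.norm_eq_abs, _root_.abs_of_nonneg (norm_nonneg _)]
            simp [RCLike.norm_conj]
      _ = (1 / (Real.pi : ℂ)) * (g z *
            ∫ s in Set.Ioc (0:ℝ) 1,
              (s : ℂ) * Complex.exp (-(s : ℂ) * z) * (starRingEnd ℂ) (F s)) := by
          congr 2
          refine setIntegral_congr_fun measurableSet_Ioc fun s hs => ?_
          have habs : |s| = s := abs_of_pos hs.1
          have hsplit : ∀ w : ℂ, f₁ w s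
              = (s : ℂ) * Complex.exp (-(s : ℂ) * z) *
                ((starRingEnd ℂ) (Complex.exp (-(s : ℂ) * w) * g w)) := by
            intro w
            simp only [hf₁def, map_mul]
            rw [show (starRingEnd ℂ) (Complex.exp (-(s : ℂ) * w))
                = Complex.exp (-(s : ℂ) * (starRingEnd ℂ) w) by
              rw [← Complex.exp_conj]; congr 1; simp]
            rw [show -(s : ℂ) * (z + (starRingEnd ℂ) w)
                = -(s : ℂ) * z + -(s : ℂ) * (starRingEnd ℂ) w by ring, Complex.exp_add]
            ring
          calc (∫ w : ℂ, f₁ w s ∂μ)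
              = ∫ w : ℂ, (s : ℂ) * Complex.exp (-(s : ℂ) * z) *
                  ((starRingEnd ℂ) (Complex.exp (-(s : ℂ) * w) * g w)) ∂μ := by
                exact integral_congr_ae (Filter.Eventually.of_forall fun w => hsplit w)
            _ = (s : ℂ) * Complex.exp (-(s : ℂ) * z) *
                  ∫ w : ℂ, (starRingEnd ℂ) (Complex.exp (-(s : ℂ) * w) * g w) ∂μ :=
                integral_const_mul _ _
            _ = (s : ℂ) * Complex.exp (-(s : ℂ) * z) * (starRingEnd ℂ) (F s) := by
                rw [integral_conj]
                congr 2
                simp only [hFdef, habs]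
  -- Step 2: outer swap
  have hItot : (∫ z : ℂ, ∫ w : ℂ, hardWallKernel z w * g z * (starRingEnd ℂ) (g w) ∂μ ∂μ)
      = (1 / (Real.pi : ℂ)) *
          ∫ s in Set.Ioc (0:ℝ) 1, (s : ℂ) * (F s * (starRingEnd ℂ) (F s)) := by
    calc (∫ z : ℂ, ∫ w : ℂ, hardWallKernel z w * g z * (starRingEnd ℂ) (g w) ∂μ ∂μ)
        = ∫ z : ℂ, (1 / (Real.pi : ℂ)) *
            (g z * ∫ s in Set.Ioc (0:ℝ) 1,
              (s : ℂ) * Complex.exp (-(s : ℂ) * z) * (starRingEnd ℂ) (F s)) ∂μ :=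
          integral_congr_ae (Filter.Eventually.of_forall fun z => claimA z)
      _ = (1 / (Real.pi : ℂ)) * ∫ z : ℂ,
            (g z * ∫ s in Set.Ioc (0:ℝ) 1,
              (s : ℂ) * Complex.exp (-(s : ℂ) * z) * (starRingEnd ℂ) (F s)) ∂μ :=
          integral_const_mul _ _
      _ = (1 / (Real.pi : ℂ)) * ∫ z : ℂ,
            (∫ s in Set.Ioc (0:ℝ) 1,
              g z * ((s : ℂ) * Complex.exp (-(s : ℂ) * z) * (starRingEnd ℂ) (F s))) ∂μ := by
          congr 1
          refine integral_congr_ae (Filter.Eventually.of_forall fun z => ?_)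
          beta_reduce
          rw [integral_const_mul]
      _ = (1 / (Real.pi : ℂ)) * ∫ s in Set.Ioc (0:ℝ) 1,
            (∫ z : ℂ, g z * ((s : ℂ) * Complex.exp (-(s : ℂ) * z) * (starRingEnd ℂ) (F s)) ∂μ) := by
          congr 1
          rw [integral_integral_swap]
          apply Integrable.mono (hbound_int.mul_const C)
          · apply Continuous.aestronglyMeasurable
            apply Continuous.mul (hg.comp continuous_fst)
            apply Continuous.mul
            apply Continuous.mul
            · exact Complex.continuous_ofReal.comp continuous_snd
            · exact Complex.continuous_exp.comp
                (((Complex.continuous_ofReal.comp continuous_snd).neg).mul continuous_fst)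
            · exact Complex.continuous_conj.comp (hFcont.comp continuous_snd)
          · filter_upwards [hae2] with p hp
            rcases p with ⟨z, s⟩
            simp only [Function.uncurry]
            by_cases hz : g z = 0
            · simp [hz]
            have hzre : 0 < z.re := hgre z hz
            rw [norm_mul, Real.norm_eq_abs, _root_.abs_of_nonneg (mul_nonneg (norm_nonneg _) hC0)]
            refine mul_le_mul_of_nonneg_left ?_ (norm_nonneg (g z))
            refine le_trans (bound_aux hp.1.le hp.2 hzre.le _) ?_
            rw [RCLike.norm_conj]
            exact hFb s
      _ = (1 / (Real.pi : ℂ)) * ∫ s in Set.Ioc (0:ℝ) 1,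
            (s : ℂ) * (F s * (starRingEnd ℂ) (F s)) := by
          congr 1
          refine setIntegral_congr_fun measurableSet_Ioc fun s hs => ?_
          have habs : |s| = s := abs_of_pos hs.1
          calc (∫ z : ℂ, g z * ((s : ℂ) * Complex.exp (-(s : ℂ) * z) * (starRingEnd ℂ) (F s)) ∂μ)
              = ∫ z : ℂ, ((s : ℂ) * (starRingEnd ℂ) (F s)) *
                  (Complex.exp (-(s : ℂ) * z) * g z) ∂μ := by
                refine integral_congr_ae (Filter.Eventually.of_forall fun z => ?_)
                beta_reduce; ring
            _ = ((s : ℂ) * (starRingEnd ℂ) (F s)) *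
                  ∫ z : ℂ, Complex.exp (-(s : ℂ) * z) * g z ∂μ := integral_const_mul _ _
            _ = (s : ℂ) * (F s * (starRingEnd ℂ) (F s)) := by
                have h7 : (∫ z : ℂ, Complex.exp (-(s : ℂ) * z) * g z ∂μ) = F s := by
                  simp only [hFdef, habs]
                rw [h7]; ring
  -- Conclusion
  have hreal : (∫ z : ℂ, ∫ w : ℂ, hardWallKernel z w * g z * (starRingEnd ℂ) (g w) ∂μ ∂μ)
      = (((1 / Real.pi) * ∫ s in Set.Ioc (0:ℝ) 1, s * Complex.normSq (F s) : ℝ) : ℂ) := by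
    rw [hItot]
    have h8 : (∫ s in Set.Ioc (0:ℝ) 1, (s : ℂ) * (F s * (starRingEnd ℂ) (F s)))
        = ∫ s in Set.Ioc (0:ℝ) 1, ((s * Complex.normSq (F s) : ℝ) : ℂ) := by
      refine integral_congr_ae (Filter.Eventually.of_forall fun s => ?_)
      beta_reduce
      rw [Complex.mul_conj]
      push_cast
      ring
    rw [h8, show (∫ s in Set.Ioc (0:ℝ) 1, ((s * Complex.normSq (F s) : ℝ) : ℂ))
        = (((∫ s in Set.Ioc (0:ℝ) 1, s * Complex.normSq (F s) : ℝ)) : ℂ) from integral_ofReal]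
    push_cast
    ring
  have hr0 : 0 ≤ (1 / Real.pi) * ∫ s in Set.Ioc (0:ℝ) 1, s * Complex.normSq (F s) := by
    apply mul_nonneg
    · positivity
    · exact setIntegral_nonneg measurableSet_Ioc fun s hs =>
        mul_nonneg hs.1.le (Complex.normSq_nonneg _)
  constructor
  · rw [hreal]; simp
  · rw [hreal]; simpa using hr0
end
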